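/- Moment bound on score functions of normally-perturbed variables: if S is a real random variable and X = S + Z with Z ~ N(0,τ) independent of S, then for every integer k ≥ 1, (E|ρ_X(X)|^k)^{1/k} ≤ √(2^{1/k}·2k/(τe)), where ρ_X is the score function of X. -/

import Mathlib

open MeasureTheory Real
open scoped NNReal ENNReal

/-- The centered Gaussian density with variance `t`. -/
noncomputable def gauss (t x : ℝ) : ℝ :=
  (Real.sqrt (2 * Real.pi * t))⁻¹ * Real.exp (-(x ^ 2) / (2 * t))

lemma gauss_continuous (τ : ℝ) : Continuous (gauss τ) := by
  unfold gauss; fun_prop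

lemma sqrt2πτ_pos {τ : ℝ} (hτ : 0 < τ) : 0 < Real.sqrt (2 * Real.pi * τ) := by
  have hπ := Real.pi_pos
  exact Real.sqrt_pos.2 (by positivity)

lemma gauss_pos {τ : ℝ} (hτ : 0 < τ) (x : ℝ) : 0 < gauss τ x := by
  unfold gauss
  have h := sqrt2πτ_pos hτ
  positivity

lemma gauss_le {τ : ℝ} (hτ : 0 < τ) (x : ℝ) : gauss τ x ≤ (Real.sqrt (2 * Real.pi * τ))⁻¹ := by
  unfold gauss
  have h := sqrt2πτ_pos hτ
  have h2 : Real.exp (-(x ^ 2) / (2 * τ)) ≤ 1 := by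
    rw [Real.exp_le_one_iff]
    have h3 : 0 ≤ x ^ 2 / (2 * τ) := by positivity
    rw [neg_div]; linarith
  nlinarith [inv_pos.2 h]

/-- key pointwise bound: `|t|^j ≤ (2jτ/e)^{j/2} exp(t²/(4τ))`. -/
lemma abs_pow_le_exp {τ : ℝ} (hτ : 0 < τ) {j : ℕ} (hj : 1 ≤ j) (t : ℝ) :
    |t| ^ j ≤ (2 * j * τ / Real.exp 1) ^ ((j : ℝ) / 2) * Real.exp (t ^ 2 / (4 * τ)) := by
  have hj0 : (0:ℝ) < j := by exact_mod_cast hj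
  have hq : (0:ℝ) < 2 * j * τ := by positivity
  set v := t ^ 2 / (2 * j * τ) with hv
  have hv0 : 0 ≤ v := by positivity
  have h1 : t ^ 2 ≤ 2 * j * τ / Real.exp 1 * Real.exp v := by
    have hle : v ≤ Real.exp v / Real.exp 1 := by
      have := Real.add_one_le_exp (v - 1)
      rw [Real.exp_sub] at this
      linarith
    have ht2 : t ^ 2 = 2 * j * τ * v := by rw [hv]; field_simp
    rw [ht2, div_mul_eq_mul_div, mul_div_assoc]
    exact (mul_le_mul_iff_right₀ hq).2 hle
  have h3 : |t| ^ j = (t ^ 2) ^ ((j : ℝ) / 2) := by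
    rw [← sq_abs, ← Real.rpow_natCast |t| 2, ← Real.rpow_mul (abs_nonneg t),
      ← Real.rpow_natCast |t| j]
    congr 1
    push_cast; ring
  have h4 : (t ^ 2) ^ ((j : ℝ) / 2) ≤ (2 * j * τ / Real.exp 1 * Real.exp v) ^ ((j : ℝ) / 2) :=
    Real.rpow_le_rpow (sq_nonneg t) h1 (by positivity)
  have h5 : (2 * j * τ / Real.exp 1 * Real.exp v) ^ ((j : ℝ) / 2)
      = (2 * j * τ / Real.exp 1) ^ ((j : ℝ) / 2) * Real.exp (t ^ 2 / (4 * τ)) := by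
    rw [Real.mul_rpow (by positivity) (Real.exp_nonneg v), ← Real.exp_mul]
    congr 2
    rw [hv]; field_simp; ring
  rw [h3]; rw [h5] at h4; exact h4

lemma convexOn_abs_pow (k : ℕ) : ConvexOn ℝ Set.univ fun t : ℝ => |t| ^ k := by
  have himg : (fun t : ℝ => |t|) '' Set.univ = Set.Ici 0 := by
    rw [Set.image_univ]
    ext y
    simp only [Set.mem_range, Set.mem_Ici]
    constructor
    · rintro ⟨t, rfl⟩; exact abs_nonneg t
    · intro hy; exact ⟨y, abs_of_nonneg hy⟩
  have hg : ConvexOn ℝ ((fun t : ℝ => |t|) '' Set.univ) (fun y : ℝ => y ^ k) := by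
    rw [himg]; exact convexOn_pow k
  have hmono : MonotoneOn (fun y : ℝ => y ^ k) ((fun t : ℝ => |t|) '' Set.univ) := by
    rw [himg]; exact fun a ha b _ hab => pow_le_pow_left₀ ha hab k
  have habs : ConvexOn ℝ Set.univ (fun t : ℝ => |t|) := by
    exact convexOn_univ_norm (E := ℝ)
  exact hg.comp habs hmono

lemma gauss_eq {τ : ℝ} (t : ℝ) :
    gauss τ t = (Real.sqrt (2 * Real.pi * τ))⁻¹ * Real.exp (-(t ^ 2) / (2 * τ)) := rfl

/-- `|t|^j * gauss τ t ≤ (2jτ/e)^{j/2} * c * exp (-t²/(4τ))`. -/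
lemma abs_pow_mul_gauss_le {τ : ℝ} (hτ : 0 < τ) {j : ℕ} (hj : 1 ≤ j) (t : ℝ) :
    |t| ^ j * gauss τ t ≤ (2 * j * τ / Real.exp 1) ^ ((j : ℝ) / 2) *
      ((Real.sqrt (2 * Real.pi * τ))⁻¹ * Real.exp (-t ^ 2 / (4 * τ))) := by
  have hc := sqrt2πτ_pos hτ
  have h1 := abs_pow_le_exp hτ hj t
  have h2 : Real.exp (t ^ 2 / (4 * τ)) * Real.exp (-(t ^ 2) / (2 * τ))
      = Real.exp (-t ^ 2 / (4 * τ)) := by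
    rw [← Real.exp_add]
    congr 1
    field_simp
    ring
  have h3 : 0 < Real.exp (-(t ^ 2) / (2 * τ)) := Real.exp_pos _
  calc |t| ^ j * gauss τ t
      ≤ ((2 * j * τ / Real.exp 1) ^ ((j : ℝ) / 2) * Real.exp (t ^ 2 / (4 * τ))) * gauss τ t := by
        apply mul_le_mul_of_nonneg_right h1 (by rw [gauss_eq]; positivity)
    _ = (2 * j * τ / Real.exp 1) ^ ((j : ℝ) / 2) *
        ((Real.sqrt (2 * Real.pi * τ))⁻¹ * Real.exp (-t ^ 2 / (4 * τ))) := by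
        rw [gauss_eq, ← h2]; ring

lemma abs_pow_mul_gauss_le_const {τ : ℝ} (hτ : 0 < τ) {j : ℕ} (hj : 1 ≤ j) (t : ℝ) :
    |t| ^ j * gauss τ t ≤ (2 * j * τ / Real.exp 1) ^ ((j : ℝ) / 2) *
      (Real.sqrt (2 * Real.pi * τ))⁻¹ := by
  have hc := sqrt2πτ_pos hτ
  have h1 := abs_pow_mul_gauss_le hτ hj t
  have h2 : Real.exp (-t ^ 2 / (4 * τ)) ≤ 1 := by
    rw [Real.exp_le_one_iff, neg_div]
    have : 0 ≤ t ^ 2 / (4 * τ) := by positivity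
    linarith
  have h3 : (0:ℝ) ≤ (2 * j * τ / Real.exp 1) ^ ((j : ℝ) / 2) := by positivity
  have h4 : (2 * j * τ / Real.exp 1) ^ ((j : ℝ) / 2) *
      ((Real.sqrt (2 * Real.pi * τ))⁻¹ * Real.exp (-t ^ 2 / (4 * τ)))
      ≤ (2 * j * τ / Real.exp 1) ^ ((j : ℝ) / 2) * ((Real.sqrt (2 * Real.pi * τ))⁻¹ * 1) := by
    apply mul_le_mul_of_nonneg_left _ h3
    exact mul_le_mul_of_nonneg_left h2 (inv_nonneg.2 hc.le)
  simpa using h1.trans h4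

lemma integrable_of_bounded {μ : Measure ℝ} [IsFiniteMeasure μ] {g : ℝ → ℝ}
    (hm : AEStronglyMeasurable g μ) {C : ℝ} (hb : ∀ s, ‖g s‖ ≤ C) : Integrable g μ :=
  Integrable.mono' (integrable_const C) hm (Filter.Eventually.of_forall hb)

lemma jensen_step {μ : Measure ℝ} [IsProbabilityMeasure μ] {τ : ℝ} (hτ : 0 < τ)
    {k : ℕ} (hk : 1 ≤ k) (x : ℝ) :
    |(∫ s, -((x - s) / τ) * gauss τ (x - s) ∂μ) / (∫ s, gauss τ (x - s) ∂μ)| ^ k *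
      (∫ s, gauss τ (x - s) ∂μ) ≤ ∫ s, (|x - s| / τ) ^ k * gauss τ (x - s) ∂μ := by
  have hc := sqrt2πτ_pos hτ
  set c := (Real.sqrt (2 * Real.pi * τ))⁻¹ with hcdef
  set w : ℝ → ℝ := fun s => gauss τ (x - s) with hwdef
  set f : ℝ → ℝ := fun s => -((x - s) / τ) with hfdef
  have hw_pos : ∀ s, 0 < w s := fun s => gauss_pos hτ _
  have hw_cont : Continuous w := (gauss_continuous τ).comp (continuous_const.sub continuous_id)
  have hf_cont : Continuous f := by fun_prop
  have hw_meas : Measurable w := hw_cont.measurable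
  have hfw : ∀ s, |f s| = |x - s| / τ := by
    intro s
    rw [hfdef]
    simp [abs_div, abs_of_pos hτ]
  -- integrability over μ
  have hw_int : Integrable w μ := by
    apply integrable_of_bounded hw_cont.aestronglyMeasurable (C := c)
    intro s
    rw [Real.norm_eq_abs, abs_of_pos (hw_pos s)]
    exact gauss_le hτ _
  have hwf_int : Integrable (fun s => w s * f s) μ := by
    apply integrable_of_bounded (hw_cont.mul hf_cont).aestronglyMeasurable
      (C := τ⁻¹ * ((2 * 1 * τ / Real.exp 1) ^ ((1 : ℝ) / 2) * c))
    intro s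
    simp only [Pi.mul_apply]
    rw [Real.norm_eq_abs, abs_mul, abs_of_pos (hw_pos s), hfw s]
    have h1 := abs_pow_mul_gauss_le_const hτ le_rfl (x - s)
    rw [pow_one] at h1
    calc w s * (|x - s| / τ) = τ⁻¹ * (|x - s| * w s) := by ring
      _ ≤ τ⁻¹ * ((2 * (1:ℕ) * τ / Real.exp 1) ^ (((1:ℕ) : ℝ) / 2) * c) := by
          apply mul_le_mul_of_nonneg_left _ (inv_nonneg.2 hτ.le)
          exact_mod_cast h1
      _ = τ⁻¹ * ((2 * 1 * τ / Real.exp 1) ^ ((1 : ℝ) / 2) * c) := by norm_num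
  have hwfk_int : Integrable (fun s => w s * |f s| ^ k) μ := by
    apply integrable_of_bounded (hw_cont.mul ((hf_cont.abs).pow k)).aestronglyMeasurable
      (C := (τ⁻¹) ^ k * ((2 * (k:ℝ) * τ / Real.exp 1) ^ ((k : ℝ) / 2) * c))
    intro s
    simp only [Pi.mul_apply, Pi.pow_apply]
    rw [Real.norm_eq_abs, abs_mul, abs_of_pos (hw_pos s),
      abs_of_nonneg (pow_nonneg (abs_nonneg _) k), hfw s]
    have h1 := abs_pow_mul_gauss_le_const hτ hk (x - s)
    calc w s * (|x - s| / τ) ^ k = (τ⁻¹) ^ k * (|x - s| ^ k * w s) := by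
          rw [div_pow]; field_simp; rw [mul_assoc (w s * |x - s| ^ k), ← mul_pow, mul_one_div_cancel hτ.ne', one_pow, mul_one]
      _ ≤ (τ⁻¹) ^ k * ((2 * (k:ℝ) * τ / Real.exp 1) ^ ((k : ℝ) / 2) * c) := by
          apply mul_le_mul_of_nonneg_left h1 (by positivity)
  -- the tilted measure
  set d : ℝ → ℝ≥0 := fun s => (w s).toNNReal with hddef
  have hd_meas : Measurable d := hw_meas.real_toNNReal
  have hdw : ∀ s, ((d s : ℝ)) = w s := fun s => Real.coe_toNNReal _ (hw_pos s).le
  have hdfun : (fun s => ((d s : ℝ))) = w := funext hdw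
  set ν : Measure ℝ := μ.withDensity (fun s => (d s : ℝ≥0∞)) with hνdef
  have hνuniv : ν Set.univ = ENNReal.ofReal (∫ s, w s ∂μ) := by
    rw [hνdef, withDensity_apply _ MeasurableSet.univ, Measure.restrict_univ,
      lintegral_coe_eq_integral d (by rw [hdfun]; exact hw_int), hdfun]
  haveI : IsFiniteMeasure ν := ⟨by rw [hνuniv]; exact ENNReal.ofReal_lt_top⟩
  have hP_pos : 0 < ∫ s, w s ∂μ := by
    rw [integral_pos_iff_support_of_nonneg (fun s => (hw_pos s).le) hw_int]
    have hsupp : Function.support w = Set.univ := Set.eq_univ_of_forall fun s => (hw_pos s).ne'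
    rw [hsupp]; simp
  haveI : NeZero ν := by
    constructor
    intro h
    rw [h] at hνuniv
    have h2 : ENNReal.ofReal (∫ s, w s ∂μ) = 0 := by
      rw [← hνuniv]; simp
    rw [ENNReal.ofReal_eq_zero] at h2
    linarith
  -- integrability with respect to ν
  have hfi : Integrable f ν := by
    rw [hνdef, integrable_withDensity_iff_integrable_smul hd_meas]
    simpa [NNReal.smul_def, hdw] using hwf_int
  have hgi : Integrable ((fun t => |t| ^ k) ∘ f) ν := by
    rw [hνdef, integrable_withDensity_iff_integrable_smul hd_meas]
    simpa [NNReal.smul_def, hdw, Function.comp] using hwfk_int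
  -- Jensen
  have hJ := (convexOn_abs_pow k).map_average_le (continuous_abs.pow k).continuousOn
    isClosed_univ (Filter.Eventually.of_forall fun s => Set.mem_univ _) hfi hgi
  have hint_eq : ∀ g : ℝ → ℝ, ∫ s, g s ∂ν = ∫ s, w s * g s ∂μ := by
    intro g
    rw [hνdef, integral_withDensity_eq_integral_smul hd_meas]
    congr 1
    funext s
    rw [NNReal.smul_def, hdw, smul_eq_mul]
  have htoreal : ν.real Set.univ = ∫ s, w s ∂μ := by
    rw [measureReal_def, hνuniv, ENNReal.toReal_ofReal hP_pos.le]
  rw [average_eq, average_eq, htoreal, hint_eq, hint_eq] at hJ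
  -- rewrite the integrands
  have hIeq : ∫ s, w s * f s ∂μ = ∫ s, -((x - s) / τ) * gauss τ (x - s) ∂μ := by
    congr 1
    funext s
    rw [hwdef, hfdef]
    ring
  have hJeq : ∫ s, w s * |f s| ^ k ∂μ
      = ∫ s, (|x - s| / τ) ^ k * gauss τ (x - s) ∂μ := by
    congr 1
    funext s
    rw [hfw s, hwdef]
    ring
  rw [hIeq, hJeq] at hJ
  have hP_pos' : 0 < integral μ w := hP_pos
  calc |(∫ (s : ℝ), -((x - s) / τ) * gauss τ (x - s) ∂μ) / integral μ w| ^ k * integral μ w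
      = |(integral μ w)⁻¹ * (∫ (s : ℝ), -((x - s) / τ) * gauss τ (x - s) ∂μ)| ^ k
          * integral μ w := by rw [div_eq_inv_mul]
    _ ≤ ((integral μ w)⁻¹ * ∫ s, (|x - s| / τ) ^ k * gauss τ (x - s) ∂μ) * integral μ w := by
        apply mul_le_mul_of_nonneg_right _ hP_pos'.le
        simpa [smul_eq_mul] using hJ
    _ = ∫ s, (|x - s| / τ) ^ k * gauss τ (x - s) ∂μ := by field_simp

lemma pX_pos {μ : Measure ℝ} [IsProbabilityMeasure μ] {τ : ℝ} (hτ : 0 < τ) (x : ℝ) :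
    0 < ∫ s, gauss τ (x - s) ∂μ := by
  have hw_cont : Continuous fun s => gauss τ (x - s) :=
    (gauss_continuous τ).comp (continuous_const.sub continuous_id)
  have hw_int : Integrable (fun s => gauss τ (x - s)) μ := by
    apply integrable_of_bounded hw_cont.aestronglyMeasurable (C := (Real.sqrt (2 * Real.pi * τ))⁻¹)
    intro s
    rw [Real.norm_eq_abs, abs_of_pos (gauss_pos hτ _)]
    exact gauss_le hτ _
  rw [integral_pos_iff_support_of_nonneg (fun s => (gauss_pos hτ _).le) hw_int]
  have hsupp : (Function.support fun s => gauss τ (x - s)) = Set.univ :=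
    Set.eq_univ_of_forall fun s => (gauss_pos hτ _).ne'
  rw [hsupp]; simp

/-- the RHS to the k-th power equals the explicit bound. -/
lemma rhs_pow {τ : ℝ} (hτ : 0 < τ) {k : ℕ} (hk : 1 ≤ k) :
    (Real.sqrt ((2:ℝ) ^ ((1:ℝ)/k) * (2 * k) / (τ * Real.exp 1))) ^ k
      = Real.sqrt 2 * (τ⁻¹ ^ k * (2 * k * τ / Real.exp 1) ^ ((k:ℝ)/2)) := by
  have hk0 : (0:ℝ) < k := by exact_mod_cast hk
  have hy : (0:ℝ) < 2 * k / (τ * Real.exp 1) := by positivity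
  have h2r : (0:ℝ) ≤ (2:ℝ) ^ ((1:ℝ)/k) := by positivity
  have hz : (2:ℝ) ^ ((1:ℝ)/k) * (2 * k) / (τ * Real.exp 1)
      = (2:ℝ) ^ ((1:ℝ)/k) * (2 * k / (τ * Real.exp 1)) := by ring
  rw [hz, Real.sqrt_eq_rpow, ← Real.rpow_natCast _ k, ← Real.rpow_mul (by positivity),
    one_div_mul_eq_div]
  rw [Real.mul_rpow h2r hy.le, ← Real.rpow_mul (by norm_num : (0:ℝ) ≤ 2)]
  have he1 : (1:ℝ)/k * ((k:ℝ)/2) = 1/2 := by field_simp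
  rw [he1, ← Real.sqrt_eq_rpow]
  have hy2 : 2 * (k:ℝ) / (τ * Real.exp 1) = (2 * k * τ / Real.exp 1) * (τ⁻¹ ^ (2:ℕ)) := by
    field_simp
  rw [hy2, Real.mul_rpow (by positivity) (by positivity), ← Real.rpow_natCast τ⁻¹ 2,
    ← Real.rpow_mul (inv_nonneg.2 hτ.le)]
  have he2 : ((2:ℕ):ℝ) * ((k:ℝ)/2) = (k:ℕ) := by push_cast; ring
  rw [he2, Real.rpow_natCast]
  ring

/-- Moment bound on the score function of a normally-perturbed random variable:
`(E|ρ_X(X)|^k)^{1/k} ≤ √(2^{1/k}·2k/(τe))`. -/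
theorem stmt5 (μ : Measure ℝ) [IsProbabilityMeasure μ] (τ : ℝ) (hτ : 0 < τ)
    (k : ℕ) (hk : 1 ≤ k) (pX p'X : ℝ → ℝ)
    (hpX : ∀ x, pX x = ∫ s, gauss τ (x - s) ∂μ)
    (hp'X : ∀ x, p'X x = ∫ s, -((x - s) / τ) * gauss τ (x - s) ∂μ) :
    (∫ x, |p'X x / pX x| ^ k * pX x) ^ ((1 : ℝ) / k)
      ≤ Real.sqrt ((2 : ℝ) ^ ((1 : ℝ) / k) * (2 * k) / (τ * Real.exp 1)) := by
  have hπ := Real.pi_pos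
  have hc := sqrt2πτ_pos hτ
  have hk0 : (0:ℝ) < k := by exact_mod_cast hk
  set c := (Real.sqrt (2 * Real.pi * τ))⁻¹ with hcdef
  set C := (2 * (k:ℝ) * τ / Real.exp 1) ^ ((k:ℝ)/2) with hCdef
  have hC0 : 0 ≤ C := by rw [hCdef]; positivity
  set F : ℝ → ℝ := fun t => (|t| / τ) ^ k * gauss τ t with hFdef
  have hF_nonneg : ∀ t, 0 ≤ F t := fun t => mul_nonneg (by positivity) (gauss_pos hτ t).le
  have hF_cont : Continuous F := ((continuous_abs.div_const τ).pow k).mul (gauss_continuous τ)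
  -- pointwise domination of F
  have hFG : ∀ t, F t ≤ τ⁻¹ ^ k * C * (c * Real.exp (-t ^ 2 / (4 * τ))) := by
    intro t
    have h1 := abs_pow_mul_gauss_le hτ hk t
    calc F t = τ⁻¹ ^ k * (|t| ^ k * gauss τ t) := by
          simp only [hFdef]
          rw [div_pow]
          field_simp
          rw [one_div_pow]; field_simp
      _ ≤ τ⁻¹ ^ k * (C * (c * Real.exp (-t ^ 2 / (4 * τ)))) :=
          mul_le_mul_of_nonneg_left h1 (by positivity)
      _ = τ⁻¹ ^ k * C * (c * Real.exp (-t ^ 2 / (4 * τ))) := by ring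
  -- the Gaussian comparison function is integrable
  have hexp_eq : ∀ t : ℝ, -t ^ 2 / (4 * τ) = -((4 * τ)⁻¹ * t ^ 2) := by
    intro t; field_simp
  have hG_int : Integrable (fun t => τ⁻¹ ^ k * C * (c * Real.exp (-t ^ 2 / (4 * τ)))) volume := by
    have h1 : Integrable (fun t : ℝ => Real.exp (-((4 * τ)⁻¹) * t ^ 2)) volume :=
      integrable_exp_neg_mul_sq (by positivity)
    have h2 : (fun t => τ⁻¹ ^ k * C * (c * Real.exp (-t ^ 2 / (4 * τ))))
        = fun t => (τ⁻¹ ^ k * C * c) * Real.exp (-((4 * τ)⁻¹) * t ^ 2) := by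
      funext t
      rw [hexp_eq t, neg_mul]
      ring
    rw [h2]
    exact h1.const_mul _
  have hF_int : Integrable F volume := by
    apply Integrable.mono' hG_int hF_cont.aestronglyMeasurable
    apply Filter.Eventually.of_forall
    intro t
    rw [Real.norm_eq_abs, abs_of_nonneg (hF_nonneg t)]
    exact hFG t
  -- bound on ∫ F
  have hIntF : ∫ t, F t ≤ Real.sqrt 2 * (τ⁻¹ ^ k * C) := by
    have h1 : ∫ t, F t ≤ ∫ t, τ⁻¹ ^ k * C * (c * Real.exp (-t ^ 2 / (4 * τ))) :=
      integral_mono hF_int hG_int hFG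
    have h2 : ∫ t, τ⁻¹ ^ k * C * (c * Real.exp (-t ^ 2 / (4 * τ)))
        = (τ⁻¹ ^ k * C * c) * Real.sqrt (Real.pi / (4 * τ)⁻¹) := by
      have h3 : (fun t => τ⁻¹ ^ k * C * (c * Real.exp (-t ^ 2 / (4 * τ))))
          = fun t => (τ⁻¹ ^ k * C * c) * Real.exp (-((4 * τ)⁻¹) * t ^ 2) := by
        funext t
        rw [hexp_eq t, neg_mul]
        ring
      rw [h3, integral_const_mul, integral_gaussian]
    have h4 : c * Real.sqrt (Real.pi / (4 * τ)⁻¹) = Real.sqrt 2 := by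
      have h5 : Real.pi / (4 * τ)⁻¹ = 2 * (2 * Real.pi * τ) := by
        field_simp
        ring
      rw [h5, Real.sqrt_mul (by norm_num) (2 * Real.pi * τ), hcdef]
      field_simp
    calc ∫ t, F t ≤ (τ⁻¹ ^ k * C * c) * Real.sqrt (Real.pi / (4 * τ)⁻¹) := h1.trans h2.le
      _ = Real.sqrt 2 * (τ⁻¹ ^ k * C) := by rw [mul_assoc, h4]; ring
  -- Jensen pointwise
  have key : ∀ x, |p'X x / pX x| ^ k * pX x ≤ ∫ s, F (x - s) ∂μ := by
    intro x
    rw [hpX, hp'X]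
    exact jensen_step hτ hk x
  -- product integrability and Fubini
  have hFp_meas : AEStronglyMeasurable (fun p : ℝ × ℝ => F (p.1 - p.2)) (volume.prod μ) :=
    (hF_cont.comp (continuous_fst.sub continuous_snd)).aestronglyMeasurable
  have hnorm_eq : ∀ s : ℝ, ∫ x, ‖F (x - s)‖ ∂volume = ∫ t, ‖F t‖ ∂volume := fun s =>
    integral_sub_right_eq_self (fun t => ‖F t‖) s
  have hprod : Integrable (fun p : ℝ × ℝ => F (p.1 - p.2)) (volume.prod μ) := by
    rw [integrable_prod_iff' hFp_meas]
    constructor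
    · exact Filter.Eventually.of_forall fun s => hF_int.comp_sub_right s
    · have : (fun s : ℝ => ∫ x, ‖F (x - s)‖ ∂volume) = fun _ : ℝ => ∫ t, ‖F t‖ ∂volume :=
        funext hnorm_eq
      rw [this]
      exact integrable_const _
  have hH_int : Integrable (fun x => ∫ s, F (x - s) ∂μ) volume := hprod.integral_prod_left
  have hswap : ∫ x, ∫ s, F (x - s) ∂μ = ∫ t, F t := by
    rw [integral_integral_swap (f := fun x s => F (x - s)) hprod]
    have h1 : ∀ s : ℝ, ∫ x, F (x - s) ∂volume = ∫ t, F t ∂volume := fun s =>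
      integral_sub_right_eq_self F s
    rw [integral_congr_ae (Filter.Eventually.of_forall h1)]
    simp [measure_univ]
  -- put everything together
  have hP0 : ∀ x, 0 < pX x := fun x => by rw [hpX]; exact pX_pos hτ x
  have hLHS_nonneg : 0 ≤ ∫ x, |p'X x / pX x| ^ k * pX x :=
    integral_nonneg fun x => mul_nonneg (by positivity) (hP0 x).le
  have hLHS_le : (∫ x, |p'X x / pX x| ^ k * pX x) ≤ ∫ t, F t := by
    rw [← hswap]
    exact integral_mono_of_nonneg
      (Filter.Eventually.of_forall fun x => mul_nonneg (by positivity) (hP0 x).le)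
      hH_int (Filter.Eventually.of_forall key)
  have hfinal : (∫ x, |p'X x / pX x| ^ k * pX x)
      ≤ (Real.sqrt ((2:ℝ) ^ ((1:ℝ)/k) * (2 * k) / (τ * Real.exp 1))) ^ k := by
    rw [rhs_pow hτ hk]
    calc (∫ x, |p'X x / pX x| ^ k * pX x) ≤ ∫ t, F t := hLHS_le
      _ ≤ Real.sqrt 2 * (τ⁻¹ ^ k * C) := hIntF
  have hrpow := Real.rpow_le_rpow hLHS_nonneg hfinal (by positivity : (0:ℝ) ≤ 1/k)
  calc (∫ x, |p'X x / pX x| ^ k * pX x) ^ ((1:ℝ)/k)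
      ≤ ((Real.sqrt ((2:ℝ) ^ ((1:ℝ)/k) * (2 * k) / (τ * Real.exp 1))) ^ k) ^ ((1:ℝ)/k) := hrpow
    _ = Real.sqrt ((2:ℝ) ^ ((1:ℝ)/k) * (2 * k) / (τ * Real.exp 1)) := by
        rw [← Real.rpow_natCast (Real.sqrt _) k, ← Real.rpow_mul (Real.sqrt_nonneg _)]
        rw [show (k:ℝ) * ((1:ℝ)/k) = 1 by field_simp, Real.rpow_one]
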